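/- arXiv:2111.13752 — 2 statements merged into one kernel-verified Lean document; each statement's English description precedes it below -/
import Mathlib

section
/- Let (A,(p_l)) be a non-unital Fréchet algebra that is a Montel space, and let n ∈ ℕ. If the unitization A# is 2n-weakly amenable, then A is 2n-weakly amenable. -/
noncomputable section

open Filter Topology

/-- A topological `ℂ`-module `X` equipped with left and right actions of `A`,
each acting by continuous linear maps on `X`.  This is the data underlying a
locally convex `A`-bimodule. -/
structure BiMod (A : Type) : Type 1 where
  X : Type
  [ag : AddCommGroup X]
  [md : Module ℂ X]
  [ts : TopologicalSpace X]
  l : A → X →L[ℂ] X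
  r : A → X →L[ℂ] X

attribute [instance] BiMod.ag BiMod.md BiMod.ts

namespace BiMod

variable {A : Type}

/-- The strong dual of a bimodule, with the canonical dual actions
`⟨a·f, x⟩ = ⟨f, x·a⟩` and `⟨f·a, x⟩ = ⟨f, a·x⟩`.  The dual carries the strong
topology (uniform convergence on von Neumann bounded sets), which is the default
topology on `X →L[ℂ] ℂ` in Mathlib. -/
def dual (M : BiMod A) : BiMod A where
  X := M.X →L[ℂ] ℂ
  l a := ContinuousLinearMap.precomp ℂ (M.r a)
  r a := ContinuousLinearMap.precomp ℂ (M.l a)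

/-- The `n`-th iterated strong dual of a bimodule (`iterDual M 0 = M`). -/
def iterDual (M : BiMod A) : ℕ → BiMod A
  | 0 => M
  | n + 1 => (M.iterDual n).dual

instance dualCSM (M : BiMod A) : ContinuousSMul ℂ (M.dual).X :=
  inferInstanceAs (ContinuousSMul ℂ (M.X →L[ℂ] ℂ))

/-- Evaluation (canonical) embedding of a bimodule into its double dual. -/
def evalEmbed (M : BiMod A) [ContinuousSMul ℂ M.X] (x : M.X) : M.dual.dual.X :=
  show (M.X →L[ℂ] ℂ) →L[ℂ] ℂ from
    ⟨⟨⟨fun f => f x, fun _ _ => rfl⟩, fun _ _ => rfl⟩, continuous_eval_const x⟩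

/-- `ContinuousSMul` holds at every level of the iterated dual. -/
def iterCSM (M : BiMod A) (h : ContinuousSMul ℂ M.X) :
    ∀ n, ContinuousSMul ℂ (M.iterDual n).X
  | 0 => h
  | n + 1 => inferInstanceAs (ContinuousSMul ℂ ((M.iterDual n).X →L[ℂ] ℂ))

/-- The canonical (iterated evaluation) embedding `M → M^(2n)`. -/
def iterEmbed (M : BiMod A) (h : ContinuousSMul ℂ M.X) :
    ∀ n : ℕ, M.X → (M.iterDual (2 * n)).X
  | 0, x => x
  | n + 1, x =>
    haveI := M.iterCSM h (2 * n)
    (M.iterDual (2 * n)).evalEmbed (M.iterEmbed h n x)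

/-- The pairing between the `(k+1)`-st dual and the `k`-th dual. -/
def pairApply (M : BiMod A) (k : ℕ) (F : (M.iterDual (k + 1)).X)
    (x : (M.iterDual k).X) : ℂ := (show (M.iterDual k).X →L[ℂ] ℂ from F) x

end BiMod

section Defs

variable (A : Type) [NonUnitalRing A] [Module ℂ A] [SMulCommClass ℂ A A] [IsScalarTower ℂ A A]
  [TopologicalSpace A] [IsTopologicalAddGroup A] [ContinuousSMul ℂ A] [ContinuousMul A]

/-- A continuous derivation from `A` into a bimodule. -/
def IsContDerivation (M : BiMod A) (D : A →L[ℂ] M.X) : Prop :=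
  ∀ a b : A, D (a * b) = M.l a (D b) + M.r b (D a)

/-- An inner derivation : `D a = a·x - x·a` for some `x`. -/
def IsInnerDerivation (M : BiMod A) (D : A →L[ℂ] M.X) : Prop :=
  ∃ x : M.X, ∀ a : A, D a = M.l a x - M.r a x

/-- `A` as a bimodule over itself, via left/right multiplication. -/
def selfBiMod : BiMod A where
  X := A
  l a := ⟨LinearMap.mulLeft ℂ a, continuous_mul_left a⟩
  r a := ⟨LinearMap.mulRight ℂ a, continuous_mul_right a⟩

/-- `A` is `n`-weakly amenable if every continuous derivation from `A` into the
`n`-th iterated strong dual `A^(n)` (with the canonical module actions) is inner. -/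
def NWeaklyAmenable (n : ℕ) : Prop :=
  ∀ D : A →L[ℂ] ((selfBiMod A).iterDual n).X,
    IsContDerivation A ((selfBiMod A).iterDual n) D →
      IsInnerDerivation A ((selfBiMod A).iterDual n) D

/-- A closed two-sided ideal `I` of `A` (a closed `ℂ`-subalgebra which absorbs
multiplication on both sides) as an `A`-bimodule. -/
def idealBiMod (I : NonUnitalSubalgebra ℂ A)
    (hl : ∀ a : A, ∀ x ∈ I, a * x ∈ I) (hr : ∀ a : A, ∀ x ∈ I, x * a ∈ I) : BiMod A where
  X := ↥I
  l a := ⟨{ toFun := fun x => (⟨a * (x : A), hl a x x.2⟩ : ↥I)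
            map_add' := fun x y => by ext; simp [mul_add]
            map_smul' := fun c x => by ext; simp [mul_smul_comm] },
          (Continuous.subtype_mk ((continuous_mul_left a).comp continuous_subtype_val) _)⟩
  r a := ⟨{ toFun := fun x => (⟨(x : A) * a, hr a x x.2⟩ : ↥I)
            map_add' := fun x y => by ext; simp [add_mul]
            map_smul' := fun c x => by ext; simp [smul_mul_assoc] },
          (Continuous.subtype_mk ((continuous_mul_right a).comp continuous_subtype_val) _)⟩

/-- `A` is `n`-ideally amenable if for every closed two-sided ideal `I` of `A`,
every continuous derivation from `A` into `I^(n)` is inner. -/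
def NIdeallyAmenable (n : ℕ) : Prop :=
  ∀ (I : NonUnitalSubalgebra ℂ A), IsClosed (I : Set A) →
    ∀ (hl : ∀ a : A, ∀ x ∈ I, a * x ∈ I) (hr : ∀ a : A, ∀ x ∈ I, x * a ∈ I),
      ∀ D : A →L[ℂ] ((idealBiMod A I hl hr).iterDual n).X,
        IsContDerivation A ((idealBiMod A I hl hr).iterDual n) D →
          IsInnerDerivation A ((idealBiMod A I hl hr).iterDual n) D

/-- The topology of `A` is generated by an increasing sequence of submultiplicative
seminorms.  Together with completeness and Hausdorffness this says that `A` is a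
Fréchet algebra. -/
def FrechetSeminorms : Prop :=
  ∃ p : SeminormFamily ℂ A ℕ, WithSeminorms p ∧ (∀ n, p n ≤ p (n + 1)) ∧
    ∀ (n : ℕ) (x y : A), p n (x * y) ≤ p n x * p n y

/-- `A` has an identity element. -/
def HasIdentity : Prop := ∃ e : A, ∀ a : A, e * a = a ∧ a * e = a

end Defs

section Montel

variable (E : Type) [AddCommGroup E] [Module ℂ E] [TopologicalSpace E]

/-- A Montel space: a barrelled locally convex Hausdorff space in which every closed
(von Neumann) bounded subset is compact. -/
def IsMontelSpace : Prop :=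
  LocallyConvexSpace ℝ E ∧ T2Space E ∧ BarrelledSpace ℂ E ∧
    ∀ s : Set E, IsClosed s → Bornology.IsVonNBounded ℂ s → IsCompact s

end Montel

section More

variable (A : Type) [NonUnitalRing A] [Module ℂ A] [SMulCommClass ℂ A A] [IsScalarTower ℂ A A]
  [TopologicalSpace A] [IsTopologicalAddGroup A] [ContinuousSMul ℂ A] [ContinuousMul A]

/-- A bounded approximate identity: a bounded net `(e_i)` with `e_i * a → a` and
`a * e_i → a` for every `a`. -/
def HasBoundedApproxIdentity : Prop :=
  ∃ (ι : Type) (_ : Preorder ι) (_ : IsDirected ι (· ≤ ·)) (_ : Nonempty ι) (e : ι → A),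
    Bornology.IsVonNBounded ℂ (Set.range e) ∧
      ∀ a : A, Tendsto (fun i => e i * a) atTop (𝓝 a) ∧
        Tendsto (fun i => a * e i) atTop (𝓝 a)

/-- `A` is essential: the linear span of products is dense. -/
def IsEssential : Prop :=
  Dense ((Submodule.span ℂ {x : A | ∃ a b : A, x = a * b} : Submodule ℂ A) : Set A)

/-- `A` is self-induced: it is essential and every balanced bilinear functional
`φ` (i.e. `φ (a*c) b = φ a (c*b)`) is of the form `φ a b = f (a*b)` for some
continuous linear functional `f`. -/
def SelfInduced : Prop :=
  IsEssential A ∧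
    ∀ φ : A →ₗ[ℂ] A →ₗ[ℂ] ℂ, (∀ a b c : A, φ (a * c) b = φ a (c * b)) →
      ∃ f : A →L[ℂ] ℂ, ∀ a b : A, φ a b = f (a * b)

/-- The data of `M : BiMod A` constitutes a genuine locally convex `A`-bimodule:
the actions satisfy the bimodule laws, are `ℂ`-bilinear, jointly continuous, and
`M.X` is locally convex. -/
structure IsLCBimod (M : BiMod A) : Prop where
  lc : LocallyConvexSpace ℝ M.X
  l_mul : ∀ (a b : A) (x : M.X), M.l (a * b) x = M.l a (M.l b x)
  r_mul : ∀ (a b : A) (x : M.X), M.r (a * b) x = M.r b (M.r a x)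
  l_add : ∀ (a b : A) (x : M.X), M.l (a + b) x = M.l a x + M.l b x
  r_add : ∀ (a b : A) (x : M.X), M.r (a + b) x = M.r a x + M.r b x
  l_smul : ∀ (c : ℂ) (a : A) (x : M.X), M.l (c • a) x = c • M.l a x
  r_smul : ∀ (c : ℂ) (a : A) (x : M.X), M.r (c • a) x = c • M.r a x
  lr_comm : ∀ (a b : A) (x : M.X), M.l a (M.r b x) = M.r b (M.l a x)
  cont_l : Continuous fun q : A × M.X => M.l q.1 q.2
  cont_r : Continuous fun q : A × M.X => M.r q.1 q.2

/-- `A` is amenable: for every locally convex `A`-bimodule `X`, every continuous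
derivation from `A` into the strong dual `X*` (with the canonical dual actions)
is inner. -/
def Amenable : Prop :=
  ∀ M : BiMod A, IsLCBimod A M →
    ∀ D : A →L[ℂ] M.dual.X, IsContDerivation A M.dual D → IsInnerDerivation A M.dual D

end More

section UnitizationInstances

variable (A : Type) [NonUnitalRing A] [Module ℂ A] [SMulCommClass ℂ A A] [IsScalarTower ℂ A A]
  [TopologicalSpace A] [IsTopologicalAddGroup A] [ContinuousSMul ℂ A] [ContinuousMul A]

/-- The unitization `A# = ℂ ⊕ A` carries the product topology, which is the topology
generated by the seminorms `q_l (a, λ) = p_l a + |λ|`. -/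
instance : TopologicalSpace (Unitization ℂ A) :=
  TopologicalSpace.induced Unitization.toProd inferInstance

theorem unitization_continuous_toProd :
    Continuous (Unitization.toProd : Unitization ℂ A → ℂ × A) :=
  continuous_induced_dom

instance : IsTopologicalAddGroup (Unitization ℂ A) where
  continuous_add := continuous_induced_rng.2 <|
    (show Continuous fun p : (ℂ × A) × ℂ × A => p.1 + p.2 by fun_prop).comp
      (((unitization_continuous_toProd A).comp continuous_fst).prodMk
        ((unitization_continuous_toProd A).comp continuous_snd))
  continuous_neg := continuous_induced_rng.2 <|
    (show Continuous fun p : ℂ × A => -p by fun_prop).comp (unitization_continuous_toProd A)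

instance : ContinuousSMul ℂ (Unitization ℂ A) where
  continuous_smul := continuous_induced_rng.2 <|
    (show Continuous fun p : ℂ × (ℂ × A) => p.1 • p.2 by fun_prop).comp
      (continuous_fst.prodMk ((unitization_continuous_toProd A).comp continuous_snd))

instance : ContinuousMul (Unitization ℂ A) where
  continuous_mul := by
    refine continuous_induced_rng.2 ?_
    exact (show Continuous fun p : (ℂ × A) × ℂ × A =>
      ((p.1.1 * p.2.1, p.1.1 • p.2.2 + p.2.1 • p.1.2 + p.1.2 * p.2.2) : ℂ × A)
      by fun_prop).comp
      (((unitization_continuous_toProd A).comp continuous_fst).prodMk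
        ((unitization_continuous_toProd A).comp continuous_snd))

end UnitizationInstances


section Proof

variable {A : Type} [NonUnitalRing A] [Module ℂ A] [SMulCommClass ℂ A A] [IsScalarTower ℂ A A]
  [TopologicalSpace A] [IsTopologicalAddGroup A] [ContinuousSMul ℂ A] [ContinuousMul A]

/-- The inclusion `A → A#` as a continuous linear map. -/
def inclCLM : A →L[ℂ] Unitization ℂ A where
  toLinearMap :=
    { toFun := fun a => Unitization.inr a
      map_add' := fun a b => by ext <;> simp
      map_smul' := fun c a => by ext <;> simp }
  cont := by
    refine continuous_induced_rng.2 ?_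
    show Continuous fun a : A => ((0, a) : ℂ × A)
    exact continuous_const.prodMk continuous_id

/-- The projection `A# → A` as a continuous linear map. -/
def sndCLM : Unitization ℂ A →L[ℂ] A where
  toLinearMap := Unitization.sndHom ℂ ℂ A
  cont := continuous_snd.comp (unitization_continuous_toProd A)

/-- The iterated-adjoint embedding `A^(2k) → (A#)^(2k)`. -/
def iotaL : ∀ k : ℕ,
    ((selfBiMod A).iterDual (2 * k)).X →L[ℂ]
      ((selfBiMod (Unitization ℂ A)).iterDual (2 * k)).X
  | 0 => inclCLM (A := A)
  | k + 1 =>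
      ContinuousLinearMap.precomp ℂ (ContinuousLinearMap.precomp ℂ (iotaL k))

/-- The iterated-adjoint projection `(A#)^(2k) → A^(2k)`. -/
def projL : ∀ k : ℕ,
    ((selfBiMod (Unitization ℂ A)).iterDual (2 * k)).X →L[ℂ]
      ((selfBiMod A).iterDual (2 * k)).X
  | 0 => sndCLM (A := A)
  | k + 1 =>
      ContinuousLinearMap.precomp ℂ (ContinuousLinearMap.precomp ℂ (projL k))

end Proof

section ProofFacts

open BiMod

variable {A : Type} [NonUnitalRing A] [Module ℂ A] [SMulCommClass ℂ A A] [IsScalarTower ℂ A A]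
  [TopologicalSpace A] [IsTopologicalAddGroup A] [ContinuousSMul ℂ A] [ContinuousMul A]

lemma pair_ext {B : Type} (M : BiMod B) (k : ℕ) {f g : (M.iterDual (k+1)).X}
    (h : ∀ x, M.pairApply k f x = M.pairApply k g x) : f = g := by
  have : (show (M.iterDual k).X →L[ℂ] ℂ from f)
      = (show (M.iterDual k).X →L[ℂ] ℂ from g) := ContinuousLinearMap.ext h
  exact this

lemma pair_l {B : Type} (M : BiMod B) (k : ℕ) (u : B) (f : (M.iterDual (k+1)).X)
    (x : (M.iterDual k).X) :
    M.pairApply k ((M.iterDual (k+1)).l u f) x = M.pairApply k f ((M.iterDual k).r u x) := rfl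

lemma pair_r {B : Type} (M : BiMod B) (k : ℕ) (u : B) (f : (M.iterDual (k+1)).X)
    (x : (M.iterDual k).X) :
    M.pairApply k ((M.iterDual (k+1)).r u f) x = M.pairApply k f ((M.iterDual k).l u x) := rfl

lemma pair_sub_left {B : Type} (M : BiMod B) (k : ℕ) (f g : (M.iterDual (k+1)).X)
    (x : (M.iterDual k).X) :
    M.pairApply k (f - g) x = M.pairApply k f x - M.pairApply k g x := rfl

lemma pair_add_left {B : Type} (M : BiMod B) (k : ℕ) (f g : (M.iterDual (k+1)).X)
    (x : (M.iterDual k).X) :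
    M.pairApply k (f + g) x = M.pairApply k f x + M.pairApply k g x := rfl

lemma pair_smul_left {B : Type} (M : BiMod B) (k : ℕ) (c : ℂ) (f : (M.iterDual (k+1)).X)
    (x : (M.iterDual k).X) :
    M.pairApply k (c • f) x = c • M.pairApply k f x := rfl

lemma pair_sub_right {B : Type} (M : BiMod B) (k : ℕ) (f : (M.iterDual (k+1)).X)
    (x y : (M.iterDual k).X) :
    M.pairApply k f (x - y) = M.pairApply k f x - M.pairApply k f y :=
  map_sub (show (M.iterDual k).X →L[ℂ] ℂ from f) x y

lemma pair_add_right {B : Type} (M : BiMod B) (k : ℕ) (f : (M.iterDual (k+1)).X)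
    (x y : (M.iterDual k).X) :
    M.pairApply k f (x + y) = M.pairApply k f x + M.pairApply k f y :=
  map_add (show (M.iterDual k).X →L[ℂ] ℂ from f) x y

lemma pair_smul_right {B : Type} (M : BiMod B) (k : ℕ) (f : (M.iterDual (k+1)).X)
    (c : ℂ) (x : (M.iterDual k).X) :
    M.pairApply k f (c • x) = c • M.pairApply k f x :=
  map_smul (show (M.iterDual k).X →L[ℂ] ℂ from f) c x

/-- The restriction-type map at odd levels. -/
def rhoOdd (k : ℕ) :
    ((selfBiMod (Unitization ℂ A)).iterDual (2*k+1)).X →L[ℂ]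
      ((selfBiMod A).iterDual (2*k+1)).X :=
  ContinuousLinearMap.precomp ℂ (iotaL k)

/-- The extension-type map at odd levels. -/
def eOdd (k : ℕ) :
    ((selfBiMod A).iterDual (2*k+1)).X →L[ℂ]
      ((selfBiMod (Unitization ℂ A)).iterDual (2*k+1)).X :=
  ContinuousLinearMap.precomp ℂ (projL k)

lemma pair_rho (k : ℕ) (f : ((selfBiMod (Unitization ℂ A)).iterDual (2*k+1)).X)
    (x : ((selfBiMod A).iterDual (2*k)).X) :
    (selfBiMod A).pairApply (2*k) (rhoOdd k f) x
      = (selfBiMod (Unitization ℂ A)).pairApply (2*k) f (iotaL k x) := rfl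

lemma pair_e (k : ℕ) (g : ((selfBiMod A).iterDual (2*k+1)).X)
    (y : ((selfBiMod (Unitization ℂ A)).iterDual (2*k)).X) :
    (selfBiMod (Unitization ℂ A)).pairApply (2*k) (eOdd k g) y
      = (selfBiMod A).pairApply (2*k) g (projL k y) := rfl

lemma pair_iota_succ (k : ℕ) (Ψ : ((selfBiMod A).iterDual (2*k+1+1)).X)
    (f : ((selfBiMod (Unitization ℂ A)).iterDual (2*k+1)).X) :
    (selfBiMod (Unitization ℂ A)).pairApply (2*k+1) (iotaL (k+1) Ψ) f
      = (selfBiMod A).pairApply (2*k+1) Ψ (rhoOdd k f) := rfl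

lemma pair_proj_succ (k : ℕ) (F : ((selfBiMod (Unitization ℂ A)).iterDual (2*k+1+1)).X)
    (g : ((selfBiMod A).iterDual (2*k+1)).X) :
    (selfBiMod A).pairApply (2*k+1) (projL (k+1) F) g
      = (selfBiMod (Unitization ℂ A)).pairApply (2*k+1) F (eOdd k g) := rfl

lemma unit_l0 (u : Unitization ℂ A) (x : A) :
    u * Unitization.inr x = Unitization.inr (u.snd * x + u.fst • x) := by
  refine Unitization.ext ?_ ?_
  · simp
  · simp [Unitization.snd_mul]
    abel

lemma unit_r0 (u : Unitization ℂ A) (x : A) :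
    Unitization.inr x * u = Unitization.inr (x * u.snd + u.fst • x) := by
  refine Unitization.ext ?_ ?_
  · simp
  · simp [Unitization.snd_mul]
    abel

lemma unit_c0 (a : A) (F : Unitization ℂ A) :
    Unitization.inr a * F - F * Unitization.inr a
      = Unitization.inr (a * F.snd - F.snd * a) := by
  refine Unitization.ext ?_ ?_
  · simp [sub_eq_add_neg, Unitization.fst_neg, Unitization.snd_mul]
  · simp [sub_eq_add_neg, Unitization.snd_neg, Unitization.snd_mul]
    abel

lemma evenFacts : ∀ k : ℕ,
    (∀ x, projL k (iotaL (A := A) k x) = x) ∧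
    (∀ (u : Unitization ℂ A) x,
      ((selfBiMod (Unitization ℂ A)).iterDual (2*k)).l u (iotaL k x)
        = iotaL k (((selfBiMod A).iterDual (2*k)).l u.snd x + u.fst • x)) ∧
    (∀ (u : Unitization ℂ A) x,
      ((selfBiMod (Unitization ℂ A)).iterDual (2*k)).r u (iotaL k x)
        = iotaL k (((selfBiMod A).iterDual (2*k)).r u.snd x + u.fst • x)) ∧
    (∀ (a : A) F,
      ((selfBiMod (Unitization ℂ A)).iterDual (2*k)).l (Unitization.inr a) F
          - ((selfBiMod (Unitization ℂ A)).iterDual (2*k)).r (Unitization.inr a) F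
        = iotaL k (((selfBiMod A).iterDual (2*k)).l a (projL k F)
            - ((selfBiMod A).iterDual (2*k)).r a (projL k F))) := by
  intro k
  induction k with
  | zero =>
    exact ⟨fun x => rfl, fun u x => unit_l0 u x, fun u x => unit_r0 u x,
      fun a F => unit_c0 a F⟩
  | succ k ih =>
    obtain ⟨P1, P2, P3, P4⟩ := ih
    have hρr : ∀ (u : Unitization ℂ A)
        (f : ((selfBiMod (Unitization ℂ A)).iterDual (2*k+1)).X),
        rhoOdd k (((selfBiMod (Unitization ℂ A)).iterDual (2*k+1)).r u f)
          = ((selfBiMod A).iterDual (2*k+1)).r u.snd (rhoOdd k f) + u.fst • rhoOdd k f := by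
      intro u f
      refine pair_ext (selfBiMod A) (2*k) fun x => ?_
      rw [pair_rho, pair_r, P2 u x, map_add, map_smul, pair_add_right, pair_smul_right,
        ← pair_rho, ← pair_rho, pair_add_left, pair_smul_left, pair_r]
    have hρl : ∀ (u : Unitization ℂ A)
        (f : ((selfBiMod (Unitization ℂ A)).iterDual (2*k+1)).X),
        rhoOdd k (((selfBiMod (Unitization ℂ A)).iterDual (2*k+1)).l u f)
          = ((selfBiMod A).iterDual (2*k+1)).l u.snd (rhoOdd k f) + u.fst • rhoOdd k f := by
      intro u f
      refine pair_ext (selfBiMod A) (2*k) fun x => ?_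
      rw [pair_rho, pair_l, P3 u x, map_add, map_smul, pair_add_right, pair_smul_right,
        ← pair_rho, ← pair_rho, pair_add_left, pair_smul_left, pair_l]
    have star : ∀ (a : A) (f : ((selfBiMod (Unitization ℂ A)).iterDual (2*k+1)).X),
        ((selfBiMod (Unitization ℂ A)).iterDual (2*k+1)).r (Unitization.inr a) f
            - ((selfBiMod (Unitization ℂ A)).iterDual (2*k+1)).l (Unitization.inr a) f
          = eOdd k (((selfBiMod A).iterDual (2*k+1)).r a (rhoOdd k f)
              - ((selfBiMod A).iterDual (2*k+1)).l a (rhoOdd k f)) := by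
      intro a f
      refine pair_ext (selfBiMod (Unitization ℂ A)) (2*k) fun x => ?_
      rw [pair_sub_left, pair_r, pair_l, ← pair_sub_right, P4 a x, map_sub, pair_sub_right,
        ← pair_rho, ← pair_rho, pair_e, pair_sub_left, pair_r, pair_l]
    refine ⟨?_, ?_, ?_, ?_⟩
    · have key : ∀ Ψ : ((selfBiMod A).iterDual (2*k+1+1)).X,
          projL (k+1) (iotaL (k+1) Ψ) = Ψ := by
        intro Ψ
        refine pair_ext (selfBiMod A) (2*k+1) fun g => ?_
        rw [pair_proj_succ, pair_iota_succ]
        have hre : rhoOdd k (eOdd k g) = g :=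
          pair_ext (selfBiMod A) (2*k) fun x => by rw [pair_rho, pair_e, P1 x]
        rw [hre]
      exact fun Ψ => key Ψ
    · have key : ∀ (u : Unitization ℂ A) (Ψ : ((selfBiMod A).iterDual (2*k+1+1)).X),
          ((selfBiMod (Unitization ℂ A)).iterDual (2*k+1+1)).l u (iotaL (k+1) Ψ)
            = iotaL (k+1) (((selfBiMod A).iterDual (2*k+1+1)).l u.snd Ψ + u.fst • Ψ) := by
        intro u Ψ
        refine pair_ext (selfBiMod (Unitization ℂ A)) (2*k+1) fun f => ?_
        rw [pair_l, pair_iota_succ, hρr u f, pair_add_right, pair_smul_right,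
          pair_iota_succ, pair_add_left, pair_smul_left, pair_l]
      exact fun u Ψ => key u Ψ
    · have key : ∀ (u : Unitization ℂ A) (Ψ : ((selfBiMod A).iterDual (2*k+1+1)).X),
          ((selfBiMod (Unitization ℂ A)).iterDual (2*k+1+1)).r u (iotaL (k+1) Ψ)
            = iotaL (k+1) (((selfBiMod A).iterDual (2*k+1+1)).r u.snd Ψ + u.fst • Ψ) := by
        intro u Ψ
        refine pair_ext (selfBiMod (Unitization ℂ A)) (2*k+1) fun f => ?_
        rw [pair_r, pair_iota_succ, hρl u f, pair_add_right, pair_smul_right,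
          pair_iota_succ, pair_add_left, pair_smul_left, pair_r]
      exact fun u Ψ => key u Ψ
    · have key : ∀ (a : A) (F : ((selfBiMod (Unitization ℂ A)).iterDual (2*k+1+1)).X),
          ((selfBiMod (Unitization ℂ A)).iterDual (2*k+1+1)).l (Unitization.inr a) F
              - ((selfBiMod (Unitization ℂ A)).iterDual (2*k+1+1)).r (Unitization.inr a) F
            = iotaL (k+1) (((selfBiMod A).iterDual (2*k+1+1)).l a (projL (k+1) F)
                - ((selfBiMod A).iterDual (2*k+1+1)).r a (projL (k+1) F)) := by
        intro a F
        refine pair_ext (selfBiMod (Unitization ℂ A)) (2*k+1) fun f => ?_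
        rw [pair_sub_left, pair_l, pair_r, ← pair_sub_right, star a f, ← pair_proj_succ,
          pair_sub_right, pair_iota_succ, pair_sub_left, pair_l, pair_r]
      exact fun a F => key a F

end ProofFacts

/-- If the unitization `A#` of a non-unital Montel Fréchet algebra `A` is
`2n`-weakly amenable, then `A` is `2n`-weakly amenable. -/
theorem nWeaklyAmenable_even_of_unitization (A : Type) [NonUnitalRing A] [Module ℂ A] [SMulCommClass ℂ A A]
    [IsScalarTower ℂ A A] [UniformSpace A] [IsUniformAddGroup A] [ContinuousSMul ℂ A]
    [ContinuousMul A] [CompleteSpace A] [T2Space A] (hA : FrechetSeminorms A)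
    (hnu : ¬ HasIdentity A) (hMontel : IsMontelSpace A) (n : ℕ)
    (h : NWeaklyAmenable (Unitization ℂ A) (2 * n)) : NWeaklyAmenable A (2 * n) := by
  intro D hD
  obtain ⟨P1, P2, P3, P4⟩ := evenFacts (A := A) n
  let D' : Unitization ℂ A →L[ℂ] ((selfBiMod (Unitization ℂ A)).iterDual (2*n)).X :=
    ((iotaL n).comp D).comp sndCLM
  have hD' : IsContDerivation (Unitization ℂ A)
      ((selfBiMod (Unitization ℂ A)).iterDual (2*n)) D' := by
    intro u v
    show iotaL n (D ((u * v).snd))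
        = ((selfBiMod (Unitization ℂ A)).iterDual (2*n)).l u (iotaL n (D v.snd))
          + ((selfBiMod (Unitization ℂ A)).iterDual (2*n)).r v (iotaL n (D u.snd))
    rw [Unitization.snd_mul, P2 u (D v.snd), P3 v (D u.snd)]
    simp only [map_add, map_smul]
    rw [hD u.snd v.snd]
    simp only [map_add]
    abel
  obtain ⟨F, hF⟩ := h D' hD'
  refine ⟨projL n F, fun a => ?_⟩
  have h1 := hF (Unitization.inr a)
  have h2 : D' (Unitization.inr a) = iotaL n (D a) := by
    show iotaL n (D ((Unitization.inr a : Unitization ℂ A).snd)) = iotaL n (D a)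
    rw [Unitization.snd_inr]
  rw [h2, P4 a F] at h1
  have h3 := congrArg (projL n) h1
  rw [P1, P1] at h3
  exact h3
end
end

section
/- Let (A,(p_l)) be a self-induced Fréchet algebra and let B be a Fréchet algebra containing A as a closed two-sided ideal. Then every continuous derivation D : A → A* extends to a continuous derivation D̃ : B → A* with D̃|_A = D. -/
noncomputable section

open Filter Topology

section SubalgebraInstances

variable {A : Type} [NonUnitalRing A] [Module ℂ A] [SMulCommClass ℂ A A] [IsScalarTower ℂ A A]
  [TopologicalSpace A] [IsTopologicalAddGroup A] [ContinuousSMul ℂ A] [ContinuousMul A]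

instance (I : NonUnitalSubalgebra ℂ A) : IsTopologicalAddGroup ↥I where
  continuous_add := by
    apply Continuous.subtype_mk
    exact (continuous_subtype_val.comp continuous_fst).add (continuous_subtype_val.comp continuous_snd)
  continuous_neg := by
    apply Continuous.subtype_mk
    exact continuous_subtype_val.neg

instance (I : NonUnitalSubalgebra ℂ A) : ContinuousMul ↥I where
  continuous_mul := by
    apply Continuous.subtype_mk
    exact (continuous_subtype_val.comp continuous_fst).mul (continuous_subtype_val.comp continuous_snd)

end SubalgebraInstances

section DerivExtAux

variable {B : Type} [NonUnitalRing B] [Module ℂ B] [SMulCommClass ℂ B B]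
    [IsScalarTower ℂ B B] [TopologicalSpace B] [IsTopologicalAddGroup B] [ContinuousSMul ℂ B]
    [ContinuousMul B] {I : NonUnitalSubalgebra ℂ B}

variable (hl : ∀ a : B, ∀ x ∈ I, a * x ∈ I) (hr : ∀ a : B, ∀ x ∈ I, x * a ∈ I)

/-- Left multiplication by an element of `B` on the ideal `I`. -/
def lmulI (b : B) (x : ↥I) : ↥I := ⟨b * (x : B), hl b x x.2⟩

/-- Right multiplication by an element of `B` on the ideal `I`. -/
def rmulI (b : B) (y : ↥I) : ↥I := ⟨(y : B) * b, hr b y y.2⟩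

/-- `D` viewed as a genuine continuous-linear-map-valued map. -/
def dcoe (D : ↥I →L[ℂ] ((selfBiMod ↥I).dual).X) : ↥I →L[ℂ] (↥I →L[ℂ] ℂ) := D

/-- Pointwise form of the derivation identity. -/
theorem D_mul_apply {D : ↥I →L[ℂ] ((selfBiMod ↥I).dual).X}
    (hD : IsContDerivation ↥I ((selfBiMod ↥I).dual) D) (u v w : ↥I) :
    dcoe D (u * v) w = dcoe D v (w * u) + dcoe D u (v * w) := by
  have h := congrArg (fun F : ((selfBiMod ↥I).dual).X => (show ↥I →L[ℂ] ℂ from F) w) (hD u v)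
  exact h

/-- Two continuous functionals agreeing on products agree everywhere (essentiality). -/
theorem ext_on_products (hess : IsEssential ↥I) {f g : ↥I →L[ℂ] ℂ}
    (h : ∀ x y : ↥I, f (x * y) = g (x * y)) : f = g := by
  have hle : Submodule.span ℂ {x : ↥I | ∃ a b : ↥I, x = a * b} ≤
      LinearMap.eqLocus (f : ↥I →ₗ[ℂ] ℂ) (g : ↥I →ₗ[ℂ] ℂ) := by
    rw [Submodule.span_le]
    rintro w ⟨a, b, rfl⟩
    exact h a b
  have heq : Set.EqOn f g
      ((Submodule.span ℂ {x : ↥I | ∃ a b : ↥I, x = a * b} : Submodule ℂ ↥I) : Set ↥I) :=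
    fun w hw => hle hw
  ext z
  exact heq.closure f.continuous g.continuous (hess z)

section Phi

variable (D : ↥I →L[ℂ] ((selfBiMod ↥I).dual).X)

/-- The bilinear form `φ_b (x, y) = ⟨D(bx), y⟩ - ⟨Dx, yb⟩`. -/
def phiB (b : B) : ↥I →ₗ[ℂ] ↥I →ₗ[ℂ] ℂ :=
  LinearMap.mk₂ ℂ (fun x y => dcoe D (lmulI hl b x) y - dcoe D x (rmulI hr b y))
    (fun x x' y => by
      have h1 : lmulI hl b (x + x') = lmulI hl b x + lmulI hl b x' :=
        Subtype.ext (by simp [lmulI, mul_add])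
      rw [h1]
      simp only [map_add, ContinuousLinearMap.add_apply]
      ring)
    (fun c x y => by
      have h1 : lmulI hl b (c • x) = c • lmulI hl b x :=
        Subtype.ext (by simp [lmulI, mul_smul_comm])
      rw [h1]
      simp only [map_smul, ContinuousLinearMap.smul_apply, smul_eq_mul]
      ring)
    (fun x y y' => by
      have h1 : rmulI hr b (y + y') = rmulI hr b y + rmulI hr b y' :=
        Subtype.ext (by simp [rmulI, add_mul])
      rw [h1]
      simp only [map_add, ContinuousLinearMap.add_apply]
      ring)
    (fun c x y => by
      have h1 : rmulI hr b (c • y) = c • rmulI hr b y :=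
        Subtype.ext (by simp [rmulI, smul_mul_assoc])
      rw [h1]
      simp only [map_smul, ContinuousLinearMap.smul_apply, smul_eq_mul]
      ring)

theorem phiB_apply (b : B) (x y : ↥I) :
    phiB hl hr D b x y = dcoe D (lmulI hl b x) y - dcoe D x (rmulI hr b y) := rfl

variable {D} in
theorem phiB_balanced (hD : IsContDerivation ↥I ((selfBiMod ↥I).dual) D) (b : B)
    (x y c : ↥I) : phiB hl hr D b (x * c) y = phiB hl hr D b x (c * y) := by
  have h1 : lmulI hl b (x * c) = lmulI hl b x * c :=
    Subtype.ext (by simp [lmulI, mul_assoc])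
  have h2 : (rmulI hr b y) * x = y * lmulI hl b x :=
    Subtype.ext (by simp [rmulI, lmulI, mul_assoc])
  have h3 : c * rmulI hr b y = rmulI hr b (c * y) :=
    Subtype.ext (by simp [rmulI, mul_assoc])
  rw [phiB_apply, phiB_apply, h1, D_mul_apply hD, D_mul_apply hD, ← h2, h3]
  ring

end Phi

section Tmap

variable (hself : SelfInduced ↥I) {D : ↥I →L[ℂ] ((selfBiMod ↥I).dual).X}
  (hD : IsContDerivation ↥I ((selfBiMod ↥I).dual) D)

/-- The candidate extension, defined through self-inducedness. -/
def Tmap (b : B) : ↥I →L[ℂ] ℂ :=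
  Classical.choose (hself.2 (phiB hl hr D b) (fun x y c => phiB_balanced hl hr hD b x y c))

theorem Tmap_spec (b : B) (x y : ↥I) :
    dcoe D (lmulI hl b x) y - dcoe D x (rmulI hr b y) = Tmap hl hr hself hD b (x * y) :=
  Classical.choose_spec (hself.2 (phiB hl hr D b)
    (fun x y c => phiB_balanced hl hr hD b x y c)) x y

theorem Tmap_add (b b' : B) :
    Tmap hl hr hself hD (b + b') = Tmap hl hr hself hD b + Tmap hl hr hself hD b' := by
  refine ext_on_products hself.1 (fun x y => ?_)
  have h1 : lmulI hl (b + b') x = lmulI hl b x + lmulI hl b' x :=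
    Subtype.ext (by simp [lmulI, add_mul])
  have h2 : rmulI hr (b + b') y = rmulI hr b y + rmulI hr b' y :=
    Subtype.ext (by simp [rmulI, mul_add])
  rw [← Tmap_spec hl hr hself hD, h1, h2, ContinuousLinearMap.add_apply,
    ← Tmap_spec hl hr hself hD b, ← Tmap_spec hl hr hself hD b']
  simp only [map_add, ContinuousLinearMap.add_apply]
  ring

theorem Tmap_smul (c : ℂ) (b : B) :
    Tmap hl hr hself hD (c • b) = c • Tmap hl hr hself hD b := by
  refine ext_on_products hself.1 (fun x y => ?_)
  have h1 : lmulI hl (c • b) x = c • lmulI hl b x :=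
    Subtype.ext (by simp [lmulI, smul_mul_assoc])
  have h2 : rmulI hr (c • b) y = c • rmulI hr b y :=
    Subtype.ext (by simp [rmulI, mul_smul_comm])
  rw [← Tmap_spec hl hr hself hD, h1, h2, ContinuousLinearMap.smul_apply,
    ← Tmap_spec hl hr hself hD b]
  simp only [map_smul, ContinuousLinearMap.smul_apply, smul_eq_mul]
  ring

theorem Tmap_zero : Tmap hl hr hself hD 0 = 0 := by
  have h := Tmap_add hl hr hself hD 0 0
  rw [add_zero] at h
  have h2 := congrArg (fun f => f - Tmap hl hr hself hD 0) h
  simpa using h2.symm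

theorem Tmap_cont_prod (x y : ↥I) :
    Continuous fun b : B => Tmap hl hr hself hD b (x * y) := by
  have heq : (fun b : B => Tmap hl hr hself hD b (x * y)) =
      fun b : B => dcoe D (lmulI hl b x) y - dcoe D x (rmulI hr b y) := by
    funext b; exact (Tmap_spec hl hr hself hD b x y).symm
  rw [heq]
  have hc1 : Continuous fun b : B => lmulI hl b x :=
    (continuous_mul_right (x : B)).subtype_mk _
  have hc2 : Continuous fun b : B => rmulI hr b y :=
    (continuous_mul_left (y : B)).subtype_mk _
  exact ((continuous_eval_const y).comp ((dcoe D).continuous.comp hc1)).sub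
    ((dcoe D x).continuous.comp hc2)

theorem Tmap_cont_span (z : ↥I)
    (hz : z ∈ Submodule.span ℂ {x : ↥I | ∃ a b : ↥I, x = a * b}) :
    Continuous fun b : B => Tmap hl hr hself hD b z := by
  let S : Submodule ℂ ↥I :=
  { carrier := {z | Continuous fun b : B => Tmap hl hr hself hD b z}
    add_mem' := fun {v w} hv hw => by
      simp only [Set.mem_setOf_eq, map_add] at hv hw ⊢; exact hv.add hw
    zero_mem' := by
      simpa only [Set.mem_setOf_eq, map_zero] using (continuous_const : Continuous fun _ : B => (0 : ℂ))
    smul_mem' := fun c v hv => by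
      simp only [Set.mem_setOf_eq, map_smul] at hv ⊢; exact hv.const_smul c }
  have hle : Submodule.span ℂ {x : ↥I | ∃ a b : ↥I, x = a * b} ≤ S := by
    rw [Submodule.span_le]
    rintro w ⟨a, b, rfl⟩
    exact Tmap_cont_prod hl hr hself hD a b
  exact hle hz

end Tmap

end DerivExtAux

section DerivExtMain

variable {B : Type} [NonUnitalRing B] [Module ℂ B] [SMulCommClass ℂ B B]
    [IsScalarTower ℂ B B] [UniformSpace B] [IsUniformAddGroup B] [ContinuousSMul ℂ B]
    [ContinuousMul B] [CompleteSpace B] [T2Space B] {I : NonUnitalSubalgebra ℂ B}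

variable (hl : ∀ a : B, ∀ x ∈ I, a * x ∈ I) (hr : ∀ a : B, ∀ x ∈ I, x * a ∈ I)
  (hself : SelfInduced ↥I) {D : ↥I →L[ℂ] ((selfBiMod ↥I).dual).X}
  (hD : IsContDerivation ↥I ((selfBiMod ↥I).dual) D)

/-- Pointwise continuity of the extension, via Banach-Steinhaus (`B` is barrelled since it
is a Fréchet space, and the evaluation functional is a pointwise limit of continuous ones). -/
theorem Tmap_cont_eval (hA : FrechetSeminorms B) (z : ↥I) :
    Continuous fun b : B => Tmap hl hr hself hD b z := by
  obtain ⟨p, hp, -, -⟩ := hA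
  haveI : FirstCountableTopology B := hp.firstCountableTopology
  haveI : (uniformity B).IsCountablyGenerated :=
    IsUniformAddGroup.uniformity_countably_generated
  obtain ⟨u, hu_mem, hu_lim⟩ := mem_closure_iff_seq_limit.mp (hself.1 z)
  let g : ℕ → B →L[ℂ] ℂ := fun k =>
    { toLinearMap :=
      { toFun := fun b => Tmap hl hr hself hD b (u k)
        map_add' := fun b b' => by
          rw [Tmap_add hl hr hself hD]; rfl
        map_smul' := fun c b => by
          rw [Tmap_smul hl hr hself hD]; rfl }
      cont := Tmap_cont_span hl hr hself hD (u k) (hu_mem k) }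
  have htend : Tendsto (fun k (b : B) => g k b) atTop
      (𝓝 fun b => Tmap hl hr hself hD b z) := by
    rw [tendsto_pi_nhds]
    intro b
    exact ((Tmap hl hr hself hD b).continuous.tendsto z).comp hu_lim
  exact ((norm_withSeminorms ℂ ℂ).continuousLinearMapOfTendsto g htend).continuous

/-- Continuity of the extension into the strong dual, via Banach-Steinhaus. -/
theorem Tmap_cont (hA : FrechetSeminorms B) :
    Continuous fun b : B => Tmap hl hr hself hD b := by
  obtain ⟨p, hp, -, -⟩ := id hA
  haveI : FirstCountableTopology B := hp.firstCountableTopology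
  haveI : (uniformity B).IsCountablyGenerated :=
    IsUniformAddGroup.uniformity_countably_generated
  have key : Tendsto (fun b : B => Tmap hl hr hself hD b) (𝓝 0)
      (𝓝 (0 : ↥I →L[ℂ] ℂ)) := by
    rw [ContinuousLinearMap.hasBasis_nhds_zero.tendsto_right_iff]
    rintro ⟨S, V⟩ ⟨hS, hV⟩
    rcases Set.eq_empty_or_nonempty S with rfl | hSne
    · filter_upwards with b z hz
      exact absurd hz (Set.notMem_empty z)
    · haveI : Nonempty S := hSne.to_subtype
      obtain ⟨ε, hε, hball⟩ := Metric.mem_nhds_iff.mp hV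
      let F : S → B →L[ℂ] ℂ := fun z =>
        { toLinearMap :=
          { toFun := fun b => Tmap hl hr hself hD b z
            map_add' := fun b b' => by
              rw [Tmap_add hl hr hself hD]; rfl
            map_smul' := fun c b => by
              rw [Tmap_smul hl hr hself hD]; rfl }
          cont := Tmap_cont_eval hl hr hself hD hA z }
      have hbdd : ∀ (k : Fin 1) (b : B),
          BddAbove (Set.range fun z : S => normSeminorm ℂ ℂ (F z b)) := by
        intro k b
        have h1 : Bornology.IsVonNBounded ℂ (Tmap hl hr hself hD b '' S) :=
          hS.image (Tmap hl hr hself hD b)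
        rw [NormedSpace.isVonNBounded_iff] at h1
        obtain ⟨C, hC⟩ := isBounded_iff_forall_norm_le.mp h1
        refine ⟨C, ?_⟩
        rintro r ⟨z, rfl⟩
        exact hC _ ⟨z, z.2, rfl⟩
      have hequi := ((norm_withSeminorms ℂ ℂ).banach_steinhaus (𝓕 := F) hbdd).equicontinuous
      have hU : {q : ℂ × ℂ | dist q.1 q.2 < ε} ∈ uniformity ℂ := Metric.dist_mem_uniformity hε
      filter_upwards [hequi 0 _ hU] with b hb
      intro z hz
      have h2 := hb ⟨z, hz⟩
      have h0 : F ⟨z, hz⟩ 0 = 0 := by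
        show Tmap hl hr hself hD 0 z = 0
        rw [Tmap_zero hl hr hself hD]
        rfl
      apply hball
      have h3 : dist (Tmap hl hr hself hD b z) 0 < ε := by
        rw [dist_comm]
        have : dist (F ⟨z, hz⟩ 0) (F ⟨z, hz⟩ b) < ε := h2
        rwa [h0] at this
      simpa [Metric.mem_ball] using h3
  have hΦ : ∀ b b' : B, Tmap hl hr hself hD (b + b') =
      Tmap hl hr hself hD b + Tmap hl hr hself hD b' := Tmap_add hl hr hself hD
  let Φ : B →+ (↥I →L[ℂ] ℂ) := AddMonoidHom.mk' (fun b => Tmap hl hr hself hD b) hΦ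
  have hcontAt : ContinuousAt Φ 0 := by
    have h0 : Φ 0 = 0 := by simpa using Tmap_zero hl hr hself hD
    rw [ContinuousAt, h0]
    exact key
  exact continuous_of_continuousAt_zero Φ hcontAt

end DerivExtMain



/-- Let `A` be a self-induced Fréchet algebra which is a closed two-sided ideal of a
Fréchet algebra `B`.  Then every continuous derivation `D : A → A*` extends to a
continuous derivation `D̃ : B → A*`. -/
theorem derivation_extension_of_selfInduced (B : Type) [NonUnitalRing B] [Module ℂ B] [SMulCommClass ℂ B B]
    [IsScalarTower ℂ B B] [UniformSpace B] [IsUniformAddGroup B] [ContinuousSMul ℂ B]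
    [ContinuousMul B] [CompleteSpace B] [T2Space B] (hA : FrechetSeminorms B)
    (I : NonUnitalSubalgebra ℂ B) (hc : IsClosed (I : Set B))
    (hl : ∀ a : B, ∀ x ∈ I, a * x ∈ I) (hr : ∀ a : B, ∀ x ∈ I, x * a ∈ I)
    (hself : SelfInduced ↥I) :
    ∀ D : ↥I →L[ℂ] ((selfBiMod ↥I).dual).X,
      IsContDerivation ↥I ((selfBiMod ↥I).dual) D →
      ∃ Dt : B →L[ℂ] ((idealBiMod B I hl hr).dual).X,
        IsContDerivation B ((idealBiMod B I hl hr).dual) Dt ∧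
        ∀ x : ↥I, Dt (x : B) = D x := by
  intro D hD
  let Dt : B →L[ℂ] ((idealBiMod B I hl hr).dual).X :=
    { toFun := fun b => Tmap hl hr hself hD b
      map_add' := fun b b' => Tmap_add hl hr hself hD b b'
      map_smul' := fun c b => Tmap_smul hl hr hself hD c b
      cont := Tmap_cont hl hr hself hD hA }
  refine ⟨Dt, ?_, ?_⟩
  · intro a b
    refine ext_on_products hself.1 (fun x y => ?_)
    have hR : rmulI hr a (x * y) = x * rmulI hr a y :=
      Subtype.ext (by simp [rmulI, mul_assoc])
    have hL : lmulI hl b (x * y) = lmulI hl b x * y :=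
      Subtype.ext (by simp [lmulI, mul_assoc])
    have hw1 : rmulI hr b (rmulI hr a y) = rmulI hr (a * b) y :=
      Subtype.ext (by simp [rmulI, mul_assoc])
    have hw2 : lmulI hl a (lmulI hl b x) = lmulI hl (a * b) x :=
      Subtype.ext (by simp [lmulI, mul_assoc])
    calc Tmap hl hr hself hD (a * b) (x * y)
        = dcoe D (lmulI hl (a * b) x) y - dcoe D x (rmulI hr (a * b) y) :=
          (Tmap_spec hl hr hself hD (a * b) x y).symm
      _ = Tmap hl hr hself hD b (rmulI hr a (x * y))
          + Tmap hl hr hself hD a (lmulI hl b (x * y)) := by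
          rw [hR, hL, ← Tmap_spec hl hr hself hD b x (rmulI hr a y),
            ← Tmap_spec hl hr hself hD a (lmulI hl b x) y, hw1, hw2]
          ring
      _ = _ := rfl
  · intro x
    refine ext_on_products hself.1 (fun u v => ?_)
    have hxu : lmulI hl (↑x) u = x * u := Subtype.ext rfl
    have hvx : rmulI hr (↑x) v = v * x := Subtype.ext rfl
    calc Tmap hl hr hself hD (↑x) (u * v)
        = dcoe D (lmulI hl (↑x) u) v - dcoe D u (rmulI hr (↑x) v) :=
          (Tmap_spec hl hr hself hD (↑x) u v).symm
      _ = dcoe D (x * u) v - dcoe D u (v * x) := by rw [hxu, hvx]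
      _ = dcoe D x (u * v) := by rw [D_mul_apply hD x u v]; ring
      _ = _ := rfl
end
end
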